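/- Every satisfiable monotone hybrid formula φ ∈ MHL(◇,□,@) with k distinct nominals and modal depth m that is satisfiable over (ℕ,<) is satisfiable in a model over (ℕ,<) in which, beyond a bounded initial segment, no nominal is true and all sufficiently large states realize the same subformulas; more precisely, there is a satisfying model (ℕ,<,η) and a bound N ≤ (k+1)·(m+1) such that, for all states u,v ≥ N and all subformulas ψ of φ, (ℕ,<,η),u ⊨ ψ iff (ℕ,<,η),v ⊨ ψ. -/
import Mathlib


/-- Monotone hybrid formulas MHL(◇,□,@) over nominals. -/
inductive HForm : Type
  | nom : ℕ → HForm
  | top : HForm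
  | bot : HForm
  | conj : HForm → HForm → HForm
  | disj : HForm → HForm → HForm
  | dia : HForm → HForm
  | box : HForm → HForm
  | at_ : ℕ → HForm → HForm
deriving DecidableEq

/-- Satisfaction in a Kripke model (W,R,η) with nominal valuation η. -/
def sat {W : Type} (R : W → W → Prop) (η : ℕ → W) (w : W) : HForm → Prop
  | .nom i => η i = w
  | .top => True
  | .bot => False
  | .conj a b => sat R η w a ∧ sat R η w b
  | .disj a b => sat R η w a ∨ sat R η w b
  | .dia a => ∃ v, R w v ∧ sat R η v a
  | .box a => ∀ v, R w v → sat R η v a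
  | .at_ i a => sat R η (η i) a

/-- Modal depth: nesting depth of ◇ and □. -/
def md : HForm → ℕ
  | .nom _ => 0
  | .top => 0
  | .bot => 0
  | .conj a b => max (md a) (md b)
  | .disj a b => max (md a) (md b)
  | .dia a => md a + 1
  | .box a => md a + 1
  | .at_ _ a => md a

/-- w is a nominal state. -/
def IsNomState {W : Type} (η : ℕ → W) (w : W) : Prop := ∃ i, η i = w

/-- δ(w) > m : for every nominal state s above w, the set of states strictly between
w and s is infinite or has more than m elements (so in particular the number of states
between w and the next nominal state above w exceeds m, or is ∞). -/
def deltaGT {W : Type} (R : W → W → Prop) (η : ℕ → W) (m : ℕ) (w : W) : Prop :=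
  ∀ s, R w s → IsNomState η s →
    ({u | R w u ∧ R u s} : Set W).Infinite ∨ m < ({u | R w u ∧ R u s} : Set W).ncard

/-- The equivalence ≡_m : equal, or both non-nominal with δ > m. -/
def equivm {W : Type} (R : W → W → Prop) (η : ℕ → W) (m : ℕ) (w w' : W) : Prop :=
  w = w' ∨ (¬IsNomState η w ∧ ¬IsNomState η w' ∧ deltaGT R η m w ∧ deltaGT R η m w')

/-- The nominals occurring in a formula. -/
def noms : HForm → Finset ℕ
  | .nom i => {i}
  | .top => ∅
  | .bot => ∅
  | .conj a b => noms a ∪ noms b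
  | .disj a b => noms a ∪ noms b
  | .dia a => noms a
  | .box a => noms a
  | .at_ i a => insert i (noms a)

/-- The subformulas of a formula (including itself). -/
def subf : HForm → Finset HForm
  | .nom i => {.nom i}
  | .top => {.top}
  | .bot => {.bot}
  | .conj a b => insert (.conj a b) (subf a ∪ subf b)
  | .disj a b => insert (.disj a b) (subf a ∪ subf b)
  | .dia a => insert (.dia a) (subf a)
  | .box a => insert (.box a) (subf a)
  | .at_ i a => insert (.at_ i a) (subf a)

open Classical in
noncomputable def cmap (S : Finset ℕ) (m : ℕ) (x : ℕ) : ℕ :=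
  ((Finset.range x).filter (fun y => y ∈ S ∨ ∃ s ∈ S, y < s ∧ s - y ≤ m)).card

lemma cmap_mono (S : Finset ℕ) (m : ℕ) {x y : ℕ} (h : x ≤ y) :
    cmap S m x ≤ cmap S m y := by
  classical
  apply Finset.card_le_card
  apply Finset.filter_subset_filter
  exact Finset.range_subset_range.2 h

lemma cmap_le (S : Finset ℕ) (m : ℕ) {x y : ℕ} (h : x ≤ y) :
    cmap S m y ≤ cmap S m x + (y - x) := by
  classical
  have hsub : (Finset.range y).filter (fun z => z ∈ S ∨ ∃ s ∈ S, z < s ∧ s - z ≤ m) ⊆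
      ((Finset.range x).filter (fun z => z ∈ S ∨ ∃ s ∈ S, z < s ∧ s - z ≤ m)) ∪ Finset.Ico x y := by
    intro z hz
    rw [Finset.mem_filter, Finset.mem_range] at hz
    rcases lt_or_ge z x with h'|h'
    · exact Finset.mem_union_left _ (Finset.mem_filter.2 ⟨Finset.mem_range.2 h', hz.2⟩)
    · exact Finset.mem_union_right _ (Finset.mem_Ico.2 ⟨h', hz.1⟩)
  calc cmap S m y ≤ _ := Finset.card_le_card hsub
    _ ≤ _ + (Finset.Ico x y).card := Finset.card_union_le _ _
    _ = cmap S m x + (y - x) := by rw [Nat.card_Ico]; rfl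

lemma cmap_lower (S : Finset ℕ) (m : ℕ) {z y : ℕ} (hz : z ∈ S) (hy : y ∈ S) (h : z < y) :
    cmap S m z + min (y - z) (m + 1) ≤ cmap S m y := by
  classical
  set P : ℕ → Prop := fun w => w ∈ S ∨ ∃ s ∈ S, w < s ∧ s - w ≤ m with hP
  set Q : Finset ℕ := insert z (Finset.Ico (max (z+1) (y - m)) y) with hQ
  have hQsub : Q ⊆ (Finset.range y).filter P := by
    intro w hw
    rw [hQ, Finset.mem_insert, Finset.mem_Ico] at hw
    rcases hw with rfl | ⟨h1, h2⟩
    · exact Finset.mem_filter.2 ⟨Finset.mem_range.2 h, Or.inl hz⟩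
    · refine Finset.mem_filter.2 ⟨Finset.mem_range.2 h2, Or.inr ⟨y, hy, h2, ?_⟩⟩
      omega
  have hdisj : Disjoint ((Finset.range z).filter P) Q := by
    rw [Finset.disjoint_left]
    intro w hw hwQ
    rw [Finset.mem_filter, Finset.mem_range] at hw
    rw [hQ, Finset.mem_insert, Finset.mem_Ico] at hwQ
    omega
  have hunion : ((Finset.range z).filter P) ∪ Q ⊆ (Finset.range y).filter P := by
    apply Finset.union_subset _ hQsub
    apply Finset.filter_subset_filter
    exact Finset.range_subset_range.2 (le_of_lt h)
  have hcard : ((Finset.range z).filter P).card + Q.card ≤ cmap S m y := by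
    rw [← Finset.card_union_of_disjoint hdisj]
    exact Finset.card_le_card hunion
  have hQcard : Q.card = 1 + (y - max (z+1) (y - m)) := by
    have hnm : z ∉ Finset.Ico (max (z+1) (y - m)) y := by
      rw [Finset.mem_Ico]; omega
    rw [hQ, Finset.card_insert_of_notMem hnm, Nat.card_Ico]
    omega
  have : cmap S m z = ((Finset.range z).filter P).card := rfl
  omega

/-- depth-d back-and-forth relation between old state u and new state u'. -/
def BFRel (S : Finset ℕ) (m d u u' : ℕ) : Prop :=
  (∃ z ∈ S, z ≤ u) ∧ ∀ x ∈ S,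
    (x = u ↔ cmap S m x = u') ∧ (u < x ↔ u' < cmap S m x) ∧
    (u < x → (x - u = cmap S m x - u' ∨ (d < x - u ∧ d < cmap S m x - u')))

lemma rel_mono (S : Finset ℕ) (m : ℕ) {d d' u u' : ℕ} (h : d ≤ d')
    (hR : BFRel S m d' u u') : BFRel S m d u u' := by
  refine ⟨hR.1, fun x hx => ?_⟩
  obtain ⟨h1, h2, h3⟩ := hR.2 x hx
  exact ⟨h1, h2, fun hlt => by rcases h3 hlt with h'|h' <;> omega⟩

lemma rel_self (S : Finset ℕ) (m : ℕ) {x : ℕ} (hx : x ∈ S) :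
    BFRel S m m x (cmap S m x) := by
  refine ⟨⟨x, hx, le_refl _⟩, fun z hz => ?_⟩
  rcases lt_trichotomy z x with h|h|h
  · have L := cmap_lower S m hz hx h
    exact ⟨by omega, by omega, fun _ => by omega⟩
  · subst h
    exact ⟨by simp, by omega, by omega⟩
  · have L := cmap_lower S m hx hz h
    have L2 := cmap_le S m (le_of_lt h)
    exact ⟨by omega, by omega, fun _ => by omega⟩

lemma rel_forth (S : Finset ℕ) (m : ℕ) {e u u' v : ℕ} (hm : e + 1 ≤ m)
    (hR : BFRel S m (e + 1) u u') (hv : u < v) :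
    ∃ v', u' < v' ∧ BFRel S m e v v' := by
  classical
  obtain ⟨⟨z0, hz0S, hz0⟩, hall⟩ := hR
  by_cases hvS : v ∈ S
  · refine ⟨cmap S m v, ?_, rel_mono S m (by omega : e ≤ m) (rel_self S m hvS)⟩
    exact ((hall v hvS).2.1).1 hv
  · by_cases hup : ∃ z ∈ S, v < z
    · set T := S.filter (fun z => v < z) with hT
      have hTne : T.Nonempty := by
        obtain ⟨z, hz, hlt⟩ := hup
        exact ⟨z, by rw [hT, Finset.mem_filter]; exact ⟨hz, hlt⟩⟩
      set y := T.min' hTne with hy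
      have hyT : y ∈ T := T.min'_mem hTne
      have hyS : y ∈ S := (Finset.mem_filter.1 hyT).1
      have hyv : v < y := (Finset.mem_filter.1 hyT).2
      have hymin : ∀ z ∈ S, v < z → y ≤ z := by
        intro z hz hlt
        exact T.min'_le z (Finset.mem_filter.2 ⟨hz, hlt⟩)
      have hz0y : z0 < y := by omega
      have H0 := cmap_lower S m hz0S hyS hz0y
      have huy := hall y hyS
      have huylt : u < y := by omega
      have hu'y : u' < cmap S m y := huy.2.1.1 huylt
      have hdist := huy.2.2 huylt
      refine ⟨cmap S m y - min (y - v) (e + 1), ?_, ⟨z0, hz0S, by omega⟩, fun z hz => ?_⟩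
      · omega
      rcases lt_trichotomy z v with h|h|h
      · have hzy : z < y := by omega
        have L := cmap_lower S m hz hyS hzy
        exact ⟨by omega, by omega, fun _ => by omega⟩
      · exact absurd (h ▸ hz) hvS
      · have hyz : y ≤ z := hymin z hz h
        rcases eq_or_lt_of_le hyz with rfl|hyz'
        · exact ⟨by omega, by omega, fun _ => by omega⟩
        · have L1 := cmap_lower S m hyS hz hyz'
          have L2 := cmap_le S m (le_of_lt hyz')
          exact ⟨by omega, by omega, fun _ => by omega⟩
    · push_neg at hup
      refine ⟨max u' (cmap S m v) + 1, by omega, ⟨z0, hz0S, by omega⟩, fun z hz => ?_⟩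
      have hzv : z ≤ v := hup z hz
      have hne : z ≠ v := fun h => hvS (h ▸ hz)
      have hc := cmap_mono S m hzv
      exact ⟨by omega, by omega, fun _ => by omega⟩

lemma rel_back (S : Finset ℕ) (m : ℕ) {e u u' v' : ℕ} (hm : e + 1 ≤ m)
    (hR : BFRel S m (e + 1) u u') (hv' : u' < v') :
    ∃ v, u < v ∧ BFRel S m e v v' := by
  classical
  obtain ⟨⟨z0, hz0S, hz0⟩, hall⟩ := hR
  by_cases hvS : ∃ z ∈ S, cmap S m z = v'
  · obtain ⟨z, hzS, hzc⟩ := hvS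
    have huz : u < z := (hall z hzS).2.1.2 (hzc ▸ hv')
    exact ⟨z, huz, hzc ▸ rel_mono S m (by omega : e ≤ m) (rel_self S m hzS)⟩
  · push_neg at hvS
    by_cases hup : ∃ z ∈ S, v' < cmap S m z
    · set T := S.filter (fun z => v' < cmap S m z) with hT
      have hTne : T.Nonempty := by
        obtain ⟨z, hz, hlt⟩ := hup
        exact ⟨z, by rw [hT, Finset.mem_filter]; exact ⟨hz, hlt⟩⟩
      set y := T.min' hTne with hy
      have hyT : y ∈ T := T.min'_mem hTne
      have hyS : y ∈ S := (Finset.mem_filter.1 hyT).1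
      have hyv : v' < cmap S m y := (Finset.mem_filter.1 hyT).2
      -- any special point below y has image below v'
      have hbelow : ∀ z ∈ S, z < y → cmap S m z < v' := by
        intro z hz hlt
        rcases lt_trichotomy (cmap S m z) v' with h|h|h
        · exact h
        · exact absurd h (hvS z hz)
        · have : y ≤ z := T.min'_le z (Finset.mem_filter.2 ⟨hz, h⟩)
          omega
      have huy := hall y hyS
      have huylt : u < y := huy.2.1.2 (by omega)
      have hdist := huy.2.2 huylt
      have hz0y : z0 < y := by omega
      have H0 := cmap_lower S m hz0S hyS hz0y
      have H0le := cmap_le S m (le_of_lt hz0y)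
      refine ⟨y - min (cmap S m y - v') (e + 1), ?_, ⟨z0, hz0S, by omega⟩, fun z hz => ?_⟩
      · omega
      rcases lt_trichotomy z y with h|h|h
      · have hc := hbelow z hz h
        have L := cmap_lower S m hz hyS h
        have L2 := cmap_le S m (le_of_lt h)
        exact ⟨by omega, by omega, fun _ => by omega⟩
      · subst h
        exact ⟨by omega, by omega, fun _ => by omega⟩
      · have L1 := cmap_lower S m hyS hz h
        have L2 := cmap_le S m (le_of_lt h)
        exact ⟨by omega, by omega, fun _ => by omega⟩
    · push_neg at hup
      have hbelow : ∀ z ∈ S, cmap S m z < v' := by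
        intro z hz
        rcases lt_trichotomy (cmap S m z) v' with h|h|h
        · exact h
        · exact absurd h (hvS z hz)
        · exact absurd h (not_lt.2 (hup z hz))
      have hne : S.Nonempty := ⟨z0, hz0S⟩
      refine ⟨max u (S.max' hne) + 1, by omega, ⟨z0, hz0S, by omega⟩, fun z hz => ?_⟩
      have h1 := S.le_max' z hz
      have h2 := hbelow z hz
      exact ⟨by omega, by omega, fun _ => by omega⟩


lemma noms_subf : ∀ φ ψ : HForm, ψ ∈ subf φ → noms ψ ⊆ noms φ := by
  intro φ
  induction φ with
  | nom i => intro ψ h; simp [subf] at h; subst h; exact subset_rfl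
  | top => intro ψ h; simp [subf] at h; subst h; exact subset_rfl
  | bot => intro ψ h; simp [subf] at h; subst h; exact subset_rfl
  | conj a b iha ihb =>
      intro ψ h
      rw [subf, Finset.mem_insert, Finset.mem_union] at h
      rcases h with rfl | h | h
      · exact subset_rfl
      · exact (iha ψ h).trans (by rw [noms]; exact Finset.subset_union_left)
      · exact (ihb ψ h).trans (by rw [noms]; exact Finset.subset_union_right)
  | disj a b iha ihb =>
      intro ψ h
      rw [subf, Finset.mem_insert, Finset.mem_union] at h
      rcases h with rfl | h | h
      · exact subset_rfl
      · exact (iha ψ h).trans (by rw [noms]; exact Finset.subset_union_left)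
      · exact (ihb ψ h).trans (by rw [noms]; exact Finset.subset_union_right)
  | dia a iha =>
      intro ψ h
      rw [subf, Finset.mem_insert] at h
      rcases h with rfl | h
      · exact subset_rfl
      · exact (iha ψ h).trans (by rw [noms])
  | box a iha =>
      intro ψ h
      rw [subf, Finset.mem_insert] at h
      rcases h with rfl | h
      · exact subset_rfl
      · exact (iha ψ h).trans (by rw [noms])
  | at_ i a iha =>
      intro ψ h
      rw [subf, Finset.mem_insert] at h
      rcases h with rfl | h
      · exact subset_rfl
      · exact (iha ψ h).trans (by rw [noms]; exact Finset.subset_insert _ _)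

/-- Eventual homogeneity: beyond all nominal values, satisfaction is constant. -/
lemma tail_lemma (η : ℕ → ℕ) : ∀ ψ : HForm, ∀ u v : ℕ,
    (∀ i ∈ noms ψ, η i < u) → (∀ i ∈ noms ψ, η i < v) →
    (sat (· < ·) η u ψ ↔ sat (· < ·) η v ψ) := by
  intro ψ
  induction ψ with
  | nom i =>
      intro u v hu hv
      have h1 := hu i (by simp [noms])
      have h2 := hv i (by simp [noms])
      simp only [sat]
      omega
  | top => intro u v _ _; simp [sat]
  | bot => intro u v _ _; simp [sat]
  | conj a b iha ihb =>
      intro u v hu hv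
      simp only [sat]
      have ha := fun i hi => hu i (by rw [noms, Finset.mem_union]; exact Or.inl hi)
      have hb := fun i hi => hu i (by rw [noms, Finset.mem_union]; exact Or.inr hi)
      have ha' := fun i hi => hv i (by rw [noms, Finset.mem_union]; exact Or.inl hi)
      have hb' := fun i hi => hv i (by rw [noms, Finset.mem_union]; exact Or.inr hi)
      exact and_congr (iha u v ha ha') (ihb u v hb hb')
  | disj a b iha ihb =>
      intro u v hu hv
      simp only [sat]
      have ha := fun i hi => hu i (by rw [noms, Finset.mem_union]; exact Or.inl hi)
      have hb := fun i hi => hu i (by rw [noms, Finset.mem_union]; exact Or.inr hi)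
      have ha' := fun i hi => hv i (by rw [noms, Finset.mem_union]; exact Or.inl hi)
      have hb' := fun i hi => hv i (by rw [noms, Finset.mem_union]; exact Or.inr hi)
      exact or_congr (iha u v ha ha') (ihb u v hb hb')
  | dia a iha =>
      intro u v hu hv
      have hu' : ∀ i ∈ noms a, η i < u := fun i hi => hu i (by rwa [noms])
      have hv' : ∀ i ∈ noms a, η i < v := fun i hi => hv i (by rwa [noms])
      simp only [sat]
      constructor
      · rintro ⟨x, hx, hsx⟩
        refine ⟨max x v + 1, by omega, ?_⟩
        exact (iha x (max x v + 1) (fun i hi => by have := hu' i hi; omega)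
          (fun i hi => by have := hu' i hi; omega)).mp hsx
      · rintro ⟨x, hx, hsx⟩
        refine ⟨max x u + 1, by omega, ?_⟩
        exact (iha x (max x u + 1) (fun i hi => by have := hv' i hi; omega)
          (fun i hi => by have := hv' i hi; omega)).mp hsx
  | box a iha =>
      intro u v hu hv
      have hu' : ∀ i ∈ noms a, η i < u := fun i hi => hu i (by rwa [noms])
      have hv' : ∀ i ∈ noms a, η i < v := fun i hi => hv i (by rwa [noms])
      simp only [sat]
      constructor
      · intro h y hy
        have hs := h (max u y + 1) (by omega)
        exact (iha (max u y + 1) y (fun i hi => by have := hu' i hi; omega)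
          (fun i hi => by have := hv' i hi; omega)).mp hs
      · intro h y hy
        have hs := h (max v y + 1) (by omega)
        exact (iha (max v y + 1) y (fun i hi => by have := hv' i hi; omega)
          (fun i hi => by have := hu' i hi; omega)).mp hs
  | at_ i a iha =>
      intro u v _ _
      simp only [sat]

/-- Main transfer lemma: satisfaction is invariant under the compression map. -/
lemma transfer (η : ℕ → ℕ) (ns : Finset ℕ) (S : Finset ℕ) (m : ℕ)
    (hS : ∀ i ∈ ns, η i ∈ S) :
    ∀ ψ : HForm, noms ψ ⊆ ns → ∀ d, md ψ ≤ d → d ≤ m → ∀ u u', BFRel S m d u u' →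
      (sat (· < ·) η u ψ ↔ sat (· < ·) (fun i => cmap S m (η i)) u' ψ) := by
  intro ψ
  induction ψ with
  | nom i =>
      intro hn d _ _ u u' hR
      have hi : η i ∈ S := hS i (hn (by simp [noms]))
      simp only [sat]
      exact (hR.2 (η i) hi).1
  | top => intro _ d _ _ u u' _; simp [sat]
  | bot => intro _ d _ _ u u' _; simp [sat]
  | conj a b iha ihb =>
      intro hn d hmd hdm u u' hR
      rw [noms] at hn
      rw [md] at hmd
      simp only [sat]
      exact and_congr
        (iha ((Finset.subset_union_left).trans hn) d (by omega) hdm u u' hR)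
        (ihb ((Finset.subset_union_right).trans hn) d (by omega) hdm u u' hR)
  | disj a b iha ihb =>
      intro hn d hmd hdm u u' hR
      rw [noms] at hn
      rw [md] at hmd
      simp only [sat]
      exact or_congr
        (iha ((Finset.subset_union_left).trans hn) d (by omega) hdm u u' hR)
        (ihb ((Finset.subset_union_right).trans hn) d (by omega) hdm u u' hR)
  | dia a iha =>
      intro hn d hmd hdm u u' hR
      rw [noms] at hn
      rw [md] at hmd
      obtain ⟨e, rfl⟩ : ∃ e, d = e + 1 := ⟨d - 1, by omega⟩
      simp only [sat]
      constructor
      · rintro ⟨v, hv, hsv⟩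
        obtain ⟨v', hv', hRv⟩ := rel_forth S m hdm hR hv
        exact ⟨v', hv', (iha hn e (by omega) (by omega) v v' hRv).mp hsv⟩
      · rintro ⟨v', hv', hsv⟩
        obtain ⟨v, hv, hRv⟩ := rel_back S m hdm hR hv'
        exact ⟨v, hv, (iha hn e (by omega) (by omega) v v' hRv).mpr hsv⟩
  | box a iha =>
      intro hn d hmd hdm u u' hR
      rw [noms] at hn
      rw [md] at hmd
      obtain ⟨e, rfl⟩ : ∃ e, d = e + 1 := ⟨d - 1, by omega⟩
      simp only [sat]
      constructor
      · intro h v' hv'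
        obtain ⟨v, hv, hRv⟩ := rel_back S m hdm hR hv'
        exact (iha hn e (by omega) (by omega) v v' hRv).mp (h v hv)
      · intro h v hv
        obtain ⟨v', hv', hRv⟩ := rel_forth S m hdm hR hv
        exact (iha hn e (by omega) (by omega) v v' hRv).mpr (h v' hv')
  | at_ i a iha =>
      intro hn d hmd hdm u u' _
      rw [noms] at hn
      rw [md] at hmd
      have hiS : η i ∈ S := hS i (hn (Finset.mem_insert_self _ _))
      have hR' : BFRel S m d (η i) (cmap S m (η i)) :=
        rel_mono S m hdm (rel_self S m hiS)
      simp only [sat]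
      exact iha ((Finset.subset_insert _ _).trans hn) d hmd hdm (η i) (cmap S m (η i)) hR'

lemma cmap_bound (S : Finset ℕ) (m : ℕ) (hne : S.Nonempty) :
    cmap S m (S.max' hne) + 1 ≤ S.card * (m + 1) := by
  classical
  set M := S.max' hne with hM
  set P : ℕ → Prop := fun w => w ∈ S ∨ ∃ s ∈ S, w < s ∧ s - w ≤ m with hP
  have hsub : insert M ((Finset.range M).filter P) ⊆
      S.biUnion (fun s => Finset.Icc (s - m) s) := by
    intro y hy
    rw [Finset.mem_insert] at hy
    rcases hy with rfl | hy
    · exact Finset.mem_biUnion.2 ⟨M, S.max'_mem hne, Finset.mem_Icc.2 (by omega)⟩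
    · rw [Finset.mem_filter, Finset.mem_range] at hy
      rcases hy.2 with h | ⟨s, hs, h1, h2⟩
      · exact Finset.mem_biUnion.2 ⟨y, h, Finset.mem_Icc.2 (by omega)⟩
      · exact Finset.mem_biUnion.2 ⟨s, hs, Finset.mem_Icc.2 (by omega)⟩
  have hnm : M ∉ (Finset.range M).filter P := by
    rw [Finset.mem_filter, Finset.mem_range]; omega
  have h1 : cmap S m M + 1 ≤ (S.biUnion (fun s => Finset.Icc (s - m) s)).card := by
    have := Finset.card_le_card hsub
    rwa [Finset.card_insert_of_notMem hnm] at this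
  have h2 : (S.biUnion (fun s => Finset.Icc (s - m) s)).card ≤ S.card * (m + 1) := by
    calc (S.biUnion (fun s => Finset.Icc (s - m) s)).card
        ≤ ∑ s ∈ S, (Finset.Icc (s - m) s).card := Finset.card_biUnion_le
      _ ≤ ∑ _s ∈ S, (m + 1) := Finset.sum_le_sum (fun s _ => by rw [Nat.card_Icc]; omega)
      _ = S.card * (m + 1) := by rw [Finset.sum_const, smul_eq_mul]
  omega

/-- Quasi-quadratic size model property over (ℕ,<): every satisfiable φ ∈ MHL(◇,□,@)
with k distinct nominals and modal depth m has a satisfying model over (ℕ,<) and a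
bound N ≤ (k+1)·(m+1) such that all nominals of φ denote states below N and all
states ≥ N realize exactly the same subformulas of φ. -/
theorem stmt15 (φ : HForm)
    (hsat : ∃ (η : ℕ → ℕ) (w : ℕ), sat (· < ·) η w φ) :
    ∃ (η : ℕ → ℕ) (w N : ℕ), sat (· < ·) η w φ ∧
      N ≤ ((noms φ).card + 1) * (md φ + 1) ∧
      (∀ i ∈ noms φ, η i < N) ∧
      (∀ u v : ℕ, N ≤ u → N ≤ v → ∀ ψ ∈ subf φ,
        (sat (· < ·) η u ψ ↔ sat (· < ·) η v ψ)) := by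
  classical
  obtain ⟨η, w, hw⟩ := hsat
  set m := md φ with hm
  set S : Finset ℕ := insert w ((noms φ).image η) with hSdef
  have hwS : w ∈ S := Finset.mem_insert_self _ _
  have hne : S.Nonempty := ⟨w, hwS⟩
  have hS : ∀ i ∈ noms φ, η i ∈ S := fun i hi =>
    Finset.mem_insert_of_mem (Finset.mem_image_of_mem η hi)
  set η' : ℕ → ℕ := fun i => cmap S m (η i) with hη'
  set N : ℕ := cmap S m (S.max' hne) + 1 with hN
  refine ⟨η', cmap S m w, N, ?_, ?_, ?_, ?_⟩
  · exact (transfer η (noms φ) S m hS φ subset_rfl m le_rfl le_rfl w (cmap S m w)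
      (rel_self S m hwS)).mp hw
  · have h1 := cmap_bound S m hne
    have h2 : S.card ≤ (noms φ).card + 1 := by
      calc S.card ≤ ((noms φ).image η).card + 1 := Finset.card_insert_le _ _
        _ ≤ (noms φ).card + 1 := by
            have := Finset.card_image_le (s := noms φ) (f := η)
            omega
    calc N ≤ S.card * (m + 1) := h1
      _ ≤ ((noms φ).card + 1) * (m + 1) := Nat.mul_le_mul_right _ h2
  · intro i hi
    have h1 : η i ≤ S.max' hne := S.le_max' _ (hS i hi)
    have h2 := cmap_mono S m h1
    have h3 : η' i = cmap S m (η i) := rfl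
    omega
  · intro u v hu hv ψ hψ
    have hns := noms_subf φ ψ hψ
    apply tail_lemma η' ψ u v
    all_goals
      intro i hi
      have hiφ : i ∈ noms φ := hns hi
      have h1 : η i ≤ S.max' hne := S.le_max' _ (hS i hiφ)
      have h2 := cmap_mono S m h1
      have h3 : η' i = cmap S m (η i) := rfl
      omega
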